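/- Let p, q be primes and let G = (C_p)^{d-1} ⋊ C_q where C_q acts on (C_p)^{d-1} by a nontrivial scalar (i.e., the generator of C_q acts as multiplication by a fixed element of order q in the multiplicative group of F_p). Then G is uniformly generated with d(G) = d. -/

import Mathlib

/-- A chain `⊥ = c 0 < c 1 < ⋯ < c n = ⊤` of subgroups is *unrefinable* if each
`c i` is maximal in `c (i+1)` (i.e. consecutive terms form a covering pair). -/
def IsUnrefinableChain {G : Type*} [Group G] {n : ℕ} (c : Fin (n + 1) → Subgroup G) : Prop :=
  c 0 = ⊥ ∧ c (Fin.last n) = ⊤ ∧ ∀ i : Fin n, c i.castSucc ⋖ c i.succ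

/-- The length `ℓ(G)`: the maximal length of an unrefinable chain of subgroups. -/
noncomputable def groupLength (G : Type*) [Group G] : ℕ :=
  sSup {n | ∃ c : Fin (n + 1) → Subgroup G, IsUnrefinableChain c}

/-- The depth `λ(G)`: the minimal length of an unrefinable chain of subgroups. -/
noncomputable def groupDepth (G : Type*) [Group G] : ℕ :=
  sInf {n | ∃ c : Fin (n + 1) → Subgroup G, IsUnrefinableChain c}

/-- `d(G)`: the minimal number of generators of `G`. -/
noncomputable def minGen (G : Type*) [Group G] : ℕ :=
  sInf {n | ∃ S : Finset G, S.card = n ∧ Subgroup.closure (S : Set G) = ⊤}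

/-- `m(G)`: the maximal size of an independent generating set of `G`. -/
noncomputable def maxIndep (G : Type*) [Group G] : ℕ :=
  sSup {n | ∃ S : Finset G, S.card = n ∧ Subgroup.closure (S : Set G) = ⊤ ∧
    ∀ a ∈ S, Subgroup.closure ((S : Set G) \ {a}) < ⊤}

/-- Given a tuple `x : Fin d → G`, the chain of subgroups
`⟨⟩ ≤ ⟨x 0⟩ ≤ ⟨x 0, x 1⟩ ≤ ⋯ ≤ ⟨x 0, …, x (d-1)⟩`. -/
def partialClosure {G : Type*} [Group G] {d : ℕ} (x : Fin d → G) (i : Fin (d + 1)) :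
    Subgroup G :=
  Subgroup.closure (x '' {j | (j : ℕ) < (i : ℕ)})

/-- `G` is *`d`-uniformly generated* if strictly ascending chains
`1 < ⟨x 1⟩ < ⋯ < ⟨x 1, …, x d⟩` exist, and every such chain ends at `G`. -/
def DUnifGen (G : Type*) [Group G] (d : ℕ) : Prop :=
  (∃ x : Fin d → G, StrictMono (partialClosure x)) ∧
  ∀ x : Fin d → G, StrictMono (partialClosure x) → Subgroup.closure (Set.range x) = ⊤

/-- `G` is *uniformly generated* if it is `d(G)`-uniformly generated. -/
def UniformlyGenerated (G : Type*) [Group G] : Prop :=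
  DUnifGen G (minGen G)

/-- `G` is elementary abelian: isomorphic to `(C_p)^k` for some prime `p`. -/
def IsElementaryAbelian (G : Type*) [Group G] : Prop :=
  ∃ (p k : ℕ), p.Prime ∧ Nonempty (G ≃* (Fin k → Multiplicative (ZMod p)))

/-- `G` is supersolvable: it has a normal series (all terms normal in `G`)
with cyclic factors (each step is obtained by adjoining a single element). -/
def IsSupersolvableGroup (G : Type*) [Group G] : Prop :=
  ∃ (n : ℕ) (c : Fin (n + 1) → Subgroup G),
    c 0 = ⊥ ∧ c (Fin.last n) = ⊤ ∧ Monotone c ∧ (∀ i, (c i).Normal) ∧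
    ∀ i : Fin n, ∃ g : G, c i.succ = c i.castSucc ⊔ Subgroup.zpowers g

/-- `G` is isomorphic to `(C_p)^{k} ⋊ C_q` where `C_q` acts by a nontrivial scalar:
expressed internally via a normal elementary abelian `p`-subgroup `N`, an element `g`
of order `q` complementing it, whose conjugation action raises every element of `N`
to a fixed power `c` which is a nontrivial scalar of multiplicative order `q` mod `p`. -/
def IsScalarExtension (G : Type*) [Group G] : Prop :=
  ∃ (p q : ℕ), p.Prime ∧ q.Prime ∧
    ∃ (N : Subgroup G) (g : G) (c : ℕ),
      N.Normal ∧ (∀ a ∈ N, ∀ b ∈ N, a * b = b * a) ∧ (∀ a ∈ N, a ^ p = 1) ∧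
      orderOf g = q ∧
      N ⊔ Subgroup.zpowers g = ⊤ ∧ N ⊓ Subgroup.zpowers g = ⊥ ∧
      (∀ n ∈ N, g * n * g⁻¹ = n ^ c) ∧
      c % p ≠ 1 % p ∧ c ^ q % p = 1 % p

open Subgroup ArithmeticFunction Pointwise
open scoped ArithmeticFunction.Omega

lemma omega_le_of_dvd {a b : ℕ} (h : a ∣ b) (hb : b ≠ 0) : Ω a ≤ Ω b := by
  obtain ⟨k, rfl⟩ := h
  have ha : a ≠ 0 := by rintro rfl; simp at hb
  have hk : k ≠ 0 := by rintro rfl; simp at hb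
  rw [cardFactors_mul ha hk]; omega

lemma omega_lt_of_dvd {a b : ℕ} (h : a ∣ b) (hab : a ≠ b) (hb : b ≠ 0) : Ω a < Ω b := by
  obtain ⟨k, rfl⟩ := h
  have ha : a ≠ 0 := by rintro rfl; simp at hb
  have hk : k ≠ 0 := by rintro rfl; simp at hb
  have hk1 : k ≠ 1 := by rintro rfl; simp at hab
  have : 1 ≤ Ω k := by
    rcases Nat.exists_prime_and_dvd hk1 with ⟨r, hr, hrd⟩
    calc 1 = Ω r := (cardFactors_apply_prime hr).symm
    _ ≤ Ω k := omega_le_of_dvd hrd hk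
  rw [cardFactors_mul ha hk]; omega

lemma eq_of_dvd_of_omega_le {a b : ℕ} (h : a ∣ b) (hb : b ≠ 0) (hΩ : Ω b ≤ Ω a) : a = b := by
  by_contra hne
  exact absurd (omega_lt_of_dvd h hne hb) (by omega)

lemma subgroup_eq_of_le_of_card_le {G : Type*} [Group G] [Finite G] {H K : Subgroup G}
    (h : H ≤ K) (hc : Nat.card K ≤ Nat.card H) : H = K := by
  apply SetLike.ext'
  apply Set.eq_of_subset_of_ncard_le h _ (Set.toFinite _)
  rwa [← Nat.card_coe_set_eq, ← Nat.card_coe_set_eq]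

lemma omega_lt_of_subgroup_lt {G : Type*} [Group G] [Finite G] {H K : Subgroup G}
    (h : H < K) : Ω (Nat.card H) < Ω (Nat.card K) := by
  apply omega_lt_of_dvd (Subgroup.card_dvd_of_le h.le) _ Nat.card_pos.ne'
  intro hcard
  exact h.ne (subgroup_eq_of_le_of_card_le h.le hcard.ge)

lemma card_sup_dvd {G : Type*} [Group G] [Finite G] (A B : Subgroup G) [hA : A.Normal] :
    Nat.card (A ⊔ B : Subgroup G) ∣ Nat.card A * Nat.card B := by
  set K : Subgroup G := A ⊔ B with hK
  have hAK : A ≤ K := le_sup_left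
  have hBK : B ≤ K := le_sup_right
  haveI : (A.subgroupOf K).Normal := hA.subgroupOf K
  have h1 : Nat.card K = Nat.card (K ⧸ A.subgroupOf K) * Nat.card (A.subgroupOf K) :=
    Subgroup.card_eq_card_quotient_mul_card_subgroup _
  have h2 : Nat.card (A.subgroupOf K) = Nat.card A :=
    Nat.card_congr (Subgroup.subgroupOfEquivOfLe hAK).toEquiv
  have h3 : Nat.card (K ⧸ A.subgroupOf K) ∣ Nat.card B := by
    apply Subgroup.card_dvd_of_surjective
      ((QuotientGroup.mk' (A.subgroupOf K)).comp (Subgroup.inclusion hBK))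
    intro z
    obtain ⟨k, rfl⟩ := QuotientGroup.mk'_surjective (A.subgroupOf K) z
    have hk : (k : G) ∈ ((A : Set G) * (B : Set G)) := by
      rw [← Subgroup.normal_mul]; exact SetLike.mem_coe.mpr k.2
    obtain ⟨a, ha, b, hb, hab⟩ := hk
    refine ⟨⟨b, hb⟩, ?_⟩
    simp only [MonoidHom.comp_apply, QuotientGroup.mk'_apply]
    rw [QuotientGroup.eq]
    show ((Subgroup.inclusion hBK ⟨b, hb⟩ : K) : G)⁻¹ * (k : G) ∈ A
    have : ((Subgroup.inclusion hBK ⟨b, hb⟩ : K) : G) = b := rfl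
    rw [this, ← hab]
    have := hA.conj_mem a ha b⁻¹
    simpa [mul_assoc] using this
  rw [h1, h2, Nat.mul_comm]
  exact Nat.mul_dvd_mul dvd_rfl h3

lemma partialClosure_zero {G : Type*} [Group G] {d : ℕ} (x : Fin d → G) :
    partialClosure x 0 = ⊥ := by
  have : {j : Fin d | (j : ℕ) < ((0 : Fin (d+1)) : ℕ)} = ∅ := by
    ext j; simp
  rw [partialClosure, this, Set.image_empty, Subgroup.closure_empty]

lemma partialClosure_last {G : Type*} [Group G] {d : ℕ} (x : Fin d → G) :
    partialClosure x (Fin.last d) = Subgroup.closure (Set.range x) := by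
  have : {j : Fin d | (j : ℕ) < ((Fin.last d) : ℕ)} = Set.univ := by
    ext j; simpa using j.isLt
  rw [partialClosure, this, Set.image_univ]

lemma chain_reaches_top {G : Type*} [Group G] [Finite G] {n : ℕ} (x : Fin n → G)
    (hsm : StrictMono (partialClosure x)) (hΩ : Ω (Nat.card G) ≤ n) :
    Subgroup.closure (Set.range x) = ⊤ := by
  have key : ∀ k : ℕ, ∀ hk : k ≤ n, k ≤ Ω (Nat.card (partialClosure x ⟨k, by omega⟩)) := by
    intro k
    induction k with
    | zero => intro _; simp
    | succ m ih =>
      intro hk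
      have h1 := ih (by omega)
      have h2 : partialClosure x ⟨m, by omega⟩ < partialClosure x ⟨m+1, by omega⟩ :=
        hsm (by simp [Fin.lt_def])
      have := omega_lt_of_subgroup_lt h2
      omega
  have h := key n le_rfl
  rw [show (⟨n, by omega⟩ : Fin (n+1)) = Fin.last n from rfl, partialClosure_last] at h
  have hdvd : Nat.card (Subgroup.closure (Set.range x)) ∣ Nat.card G :=
    Subgroup.card_subgroup_dvd_card _
  have hcard : Nat.card (Subgroup.closure (Set.range x)) = Nat.card G :=
    eq_of_dvd_of_omega_le hdvd Nat.card_pos.ne' (le_trans hΩ h)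
  exact Subgroup.eq_top_of_card_eq _ hcard

section Specific
open SemidirectProduct Multiplicative

variable {p q d : ℕ} [Fact p.Prime] [Fact q.Prime]
variable {c : ZMod p}
variable {φ : Multiplicative (ZMod q) →* MulAut (Multiplicative (Fin (d - 1) → ZMod p))}

local notation "GG" =>
  SemidirectProduct (Multiplicative (Fin (d - 1) → ZMod p)) (Multiplicative (ZMod q)) φ

noncomputable instance : Fintype GG :=
  Fintype.ofInjective (fun x => (x.left, x.right))
    (by intro a b h; ext <;> simp_all)

lemma card_GG : Nat.card GG = p ^ (d - 1) * q := by
  have e : GG ≃ (Multiplicative (Fin (d - 1) → ZMod p)) × (Multiplicative (ZMod q)) :=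
    ⟨fun x => (x.left, x.right), fun y => ⟨y.1, y.2⟩, fun x => rfl, fun y => rfl⟩
  rw [Nat.card_congr e, Nat.card_prod,
    Nat.card_congr (Multiplicative.toAdd (α := Fin (d-1) → ZMod p)),
    Nat.card_congr (Multiplicative.toAdd (α := ZMod q)), Nat.card_pi, Nat.card_zmod]
  simp [Nat.card_zmod]

lemma smul_val_eq {k : ℕ} (z : ZMod p) (w : Fin k → ZMod p) : z.val • w = z • w := by
  funext i
  show (z.val : ℕ) • w i = z * w i
  rw [nsmul_eq_mul, ZMod.natCast_rightInverse z]

lemma npow_left_eq (v : Multiplicative (Fin (d - 1) → ZMod p)) (n : ℕ) :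
    v ^ n = Multiplicative.ofAdd (n • toAdd v) := by
  rw [ofAdd_nsmul, ofAdd_toAdd]

lemma npow_right_eq (t : Multiplicative (ZMod q)) (n : ℕ) :
    t ^ n = Multiplicative.ofAdd (n • toAdd t) := by
  rw [ofAdd_nsmul, ofAdd_toAdd]

variable (hφ : ∀ (x : ZMod q) (v : Fin (d - 1) → ZMod p),
      φ (Multiplicative.ofAdd x) (Multiplicative.ofAdd v)
        = Multiplicative.ofAdd (c ^ x.val • v))

include hφ

lemma phi_apply_eq (t : Multiplicative (ZMod q)) (v : Multiplicative (Fin (d - 1) → ZMod p)) :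
    φ t v = Multiplicative.ofAdd (c ^ (toAdd t).val • toAdd v) := by
  have h := hφ (toAdd t) (toAdd v)
  rwa [ofAdd_toAdd, ofAdd_toAdd] at h

lemma conj_mem_zpowers (a x : GG) (hx : x.right = 1) : a * x * a⁻¹ ∈ Subgroup.zpowers x := by
  have hx' : x = inl x.left := by ext <;> simp [hx]
  have h1 : a * x * a⁻¹ = inl (φ a.right x.left) := by
    rw [hx']; ext <;> simp [mul_assoc, mul_comm]
  set m : ℕ := (c ^ (toAdd a.right).val).val with hm
  have h2 : φ a.right x.left = x.left ^ m := by
    rw [phi_apply_eq hφ, npow_left_eq, ← smul_val_eq]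
  have h3 : x ^ m = inl (x.left ^ m) := by
    conv_lhs => rw [hx']
    exact (map_pow _ _ _).symm
  refine ⟨(m : ℤ), ?_⟩
  show x ^ (m : ℤ) = a * x * a⁻¹
  rw [zpow_natCast, h3, h1, h2]

omit hφ in
lemma pow_p_eq_one (x : GG) (hx : x.right = 1) : x ^ p = 1 := by
  have hx' : x = inl x.left := by ext <;> simp [hx]
  have hz : p • toAdd x.left = (0 : Fin (d - 1) → ZMod p) := by
    funext i
    rw [Pi.smul_apply, nsmul_eq_mul, ZMod.natCast_self, zero_mul, Pi.zero_apply]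
  have h1 : x.left ^ p = 1 := by
    rw [npow_left_eq, hz, ofAdd_zero]
  conv_lhs => rw [hx']
  rw [← map_pow, h1, map_one]

lemma pow_formula (x : GG) (n : ℕ) :
    x ^ n = ⟨Multiplicative.ofAdd
      ((∑ i ∈ Finset.range n, c ^ ((i • toAdd x.right).val)) • toAdd x.left),
      x.right ^ n⟩ := by
  induction n with
  | zero => ext <;> simp
  | succ m ih =>
    rw [pow_succ, ih, mul_def]
    refine SemidirectProduct.ext ?_ ?_
    · show Multiplicative.ofAdd _ * φ (x.right ^ m) x.left = Multiplicative.ofAdd _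
      rw [npow_right_eq, phi_apply_eq hφ, toAdd_ofAdd, ← ofAdd_add, ← add_smul,
        ← Finset.sum_range_succ]
    · show x.right ^ m * x.right = x.right ^ (m + 1)
      rw [pow_succ]

lemma pow_q_eq_one (hc : orderOf c = q) (x : GG) (hx : x.right ≠ 1) : x ^ q = 1 := by
  have hq : q.Prime := Fact.out
  haveI : NeZero q := ⟨hq.ne_zero⟩
  set t : ZMod q := toAdd x.right with ht
  have htne : t ≠ 0 := fun h => hx (by rw [show x.right = Multiplicative.ofAdd t from rfl, h]; rfl)
  set u : ZMod p := c ^ t.val with hu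
  have hcq : c ^ q = 1 := by rw [← hc]; exact pow_orderOf_eq_one c
  have hcoef : ∀ i : ℕ, c ^ ((i • t).val) = u ^ i := by
    intro i
    rw [hu, ← pow_mul]
    have hmod : (i • t).val % q = (t.val * i) % q := by
      refine (ZMod.natCast_eq_natCast_iff _ _ _).mp ?_
      push_cast
      rw [ZMod.natCast_rightInverse, ZMod.natCast_rightInverse]
      ring
    have e1 := pow_mod_orderOf c ((i • t).val)
    have e2 := pow_mod_orderOf c (t.val * i)
    rw [hc] at e1 e2
    calc c ^ ((i • t).val) = c ^ ((i • t).val % q) := e1.symm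
    _ = c ^ ((t.val * i) % q) := by rw [hmod]
    _ = c ^ (t.val * i) := e2
  have hune : u ≠ 1 := by
    intro h
    have hdvd : orderOf c ∣ t.val := orderOf_dvd_of_pow_eq_one h
    rw [hc] at hdvd
    have := Nat.eq_zero_of_dvd_of_lt hdvd (ZMod.val_lt t)
    exact htne (by rwa [← ZMod.val_eq_zero])
  have huq : u ^ q = 1 := by
    rw [hu, ← pow_mul, mul_comm t.val q, pow_mul, hcq, one_pow]
  have hsum : (∑ i ∈ Finset.range q, c ^ ((i • t).val)) = 0 := by
    calc (∑ i ∈ Finset.range q, c ^ ((i • t).val)) = ∑ i ∈ Finset.range q, u ^ i :=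
          Finset.sum_congr rfl fun i _ => hcoef i
    _ = (u ^ q - 1) / (u - 1) := geom_sum_eq hune q
    _ = 0 := by rw [huq, sub_self, zero_div]
  have hqt : (q : ℕ) • t = 0 := by rw [nsmul_eq_mul, ZMod.natCast_self, zero_mul]
  have hrq : x.right ^ q = 1 := by
    rw [npow_right_eq, ← ht, hqt, ofAdd_zero]
  rw [pow_formula hφ, ← ht, hsum, hrq]
  refine SemidirectProduct.ext ?_ ?_
  · show Multiplicative.ofAdd ((0 : ZMod p) • toAdd x.left) = 1
    rw [zero_smul, ofAdd_zero]
  · rfl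

omit hφ in
lemma right_pow (z : GG) (n : ℕ) : (z ^ n).right = z.right ^ n :=
  map_pow (rightHom (φ := φ)) z n

lemma zpowers_normal_of_right_eq_one (x : GG) (hx : x.right = 1) :
    (Subgroup.zpowers x).Normal := by
  constructor
  rintro n ⟨k, rfl⟩ g
  have hm := conj_mem_zpowers hφ g x hx
  have h2 : g * x ^ k * g⁻¹ = (g * x * g⁻¹) ^ k := by
    simpa [MulAut.conj_apply] using map_zpow (MulAut.conj g) x k
  show g * x ^ k * g⁻¹ ∈ _
  rw [h2]
  exact Subgroup.zpow_mem _ hm k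

lemma key_step (hc : orderOf c = q) (H : Subgroup GG) (x : GG) :
    ∃ r : ℕ, r.Prime ∧ Nat.card (H ⊔ Subgroup.zpowers x : Subgroup GG) ∣ r * Nat.card H := by
  have hp : p.Prime := Fact.out
  have hq : q.Prime := Fact.out
  have main : ∀ y : GG, y.right = 1 →
      Nat.card (H ⊔ Subgroup.zpowers y : Subgroup GG) ∣ p * Nat.card H := by
    intro y hy
    haveI := zpowers_normal_of_right_eq_one hφ y hy
    have h1 : Nat.card (Subgroup.zpowers y ⊔ H : Subgroup GG) ∣
        Nat.card (Subgroup.zpowers y) * Nat.card H := card_sup_dvd _ _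
    rw [sup_comm] at h1
    refine h1.trans (Nat.mul_dvd_mul ?_ dvd_rfl)
    rw [Nat.card_zpowers]
    exact orderOf_dvd_of_pow_eq_one (pow_p_eq_one y hy)
  by_cases hx : x.right = 1
  · exact ⟨p, hp, main x hx⟩
  · by_cases hH : ∀ h ∈ H, (h : GG).right = 1
    · refine ⟨q, hq, ?_⟩
      haveI : H.Normal := by
        constructor
        intro n hn g
        exact (Subgroup.zpowers_le.mpr hn) (conj_mem_zpowers hφ g n (hH n hn))
      have h1 : Nat.card (H ⊔ Subgroup.zpowers x : Subgroup GG) ∣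
          Nat.card H * Nat.card (Subgroup.zpowers x) := card_sup_dvd _ _
      refine h1.trans ?_
      rw [Nat.mul_comm q _]
      refine Nat.mul_dvd_mul dvd_rfl ?_
      rw [Nat.card_zpowers]
      exact orderOf_dvd_of_pow_eq_one (pow_q_eq_one hφ hc x hx)
    · push_neg at hH
      obtain ⟨h, hhH, hhne⟩ := hH
      haveI : NeZero q := ⟨hq.ne_zero⟩
      set th : ZMod q := toAdd h.right with hth
      have hthne : th ≠ 0 := fun hz =>
        hhne (by rw [show h.right = Multiplicative.ofAdd th from rfl, hz]; rfl)
      set m : ℕ := (-toAdd x.right * th⁻¹).val with hm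
      have hyr : (x * h ^ m).right = 1 := by
        have h1 : (x * h ^ m).right = x.right * h.right ^ m := by
          rw [mul_right, right_pow]
        have h2 : toAdd x.right + (m : ℕ) • th = 0 := by
          rw [nsmul_eq_mul, hm, ZMod.natCast_rightInverse, mul_assoc,
            inv_mul_cancel₀ hthne, mul_one, add_neg_cancel]
        rw [h1, npow_right_eq, ← hth]
        calc x.right * Multiplicative.ofAdd ((m : ℕ) • th)
            = Multiplicative.ofAdd (toAdd x.right + (m : ℕ) • th) := by
              rw [ofAdd_add, ofAdd_toAdd]
        _ = 1 := by rw [h2, ofAdd_zero]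
      have hsup : H ⊔ Subgroup.zpowers x = H ⊔ Subgroup.zpowers (x * h ^ m) := by
        apply le_antisymm
        · refine sup_le le_sup_left (Subgroup.zpowers_le.mpr ?_)
          have hmm : (x * h ^ m) * (h ^ m)⁻¹ ∈ H ⊔ Subgroup.zpowers (x * h ^ m) :=
            Subgroup.mul_mem _ (Subgroup.mem_sup_right (Subgroup.mem_zpowers _))
              (Subgroup.inv_mem _ (Subgroup.mem_sup_left (Subgroup.pow_mem _ hhH m)))
          simpa using hmm
        · refine sup_le le_sup_left (Subgroup.zpowers_le.mpr ?_)
          exact Subgroup.mul_mem _ (Subgroup.mem_sup_right (Subgroup.mem_zpowers _))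
            (Subgroup.mem_sup_left (Subgroup.pow_mem _ hhH m))
      exact ⟨p, hp, hsup ▸ main (x * h ^ m) hyr⟩

lemma closure_card_omega (hc : orderOf c = q) (S : Finset GG) :
    Ω (Nat.card (Subgroup.closure (S : Set GG))) ≤ S.card := by
  classical
  induction S using Finset.induction_on with
  | empty => simp [Subgroup.closure_empty, Subgroup.card_bot]
  | @insert a S ha ih =>
    have hcl : Subgroup.closure ((insert a S : Finset GG) : Set GG)
        = Subgroup.closure (S : Set GG) ⊔ Subgroup.zpowers a := by
      rw [Finset.coe_insert, Set.insert_eq, Subgroup.closure_union,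
        ← Subgroup.zpowers_eq_closure, sup_comm]
    obtain ⟨r, hr, hdvd⟩ := key_step hφ hc (Subgroup.closure (S : Set GG)) a
    rw [hcl, Finset.card_insert_of_notMem ha]
    have h1 := omega_le_of_dvd hdvd (Nat.mul_ne_zero hr.ne_zero Nat.card_pos.ne')
    rw [cardFactors_mul hr.ne_zero Nat.card_pos.ne', cardFactors_apply_prime hr] at h1
    omega

lemma exists_strictmono_chain (hd : 1 ≤ d) :
    ∃ x : Fin d → GG, StrictMono (partialClosure x) := by
  classical
  have hqp : q.Prime := Fact.out
  let x : Fin d → GG := fun j =>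
    if h : (j : ℕ) < d - 1 then
      inl (Multiplicative.ofAdd (Pi.single (⟨j, h⟩ : Fin (d - 1)) (1 : ZMod p)))
    else inr (Multiplicative.ofAdd (1 : ZMod q))
  refine ⟨x, ?_⟩
  rw [Fin.strictMono_iff_lt_succ]
  intro i
  have hmono : partialClosure x i.castSucc ≤ partialClosure x i.succ :=
    Subgroup.closure_mono (Set.image_mono (fun j hj => by
      simp only [Set.mem_setOf_eq, Fin.coe_castSucc, Fin.val_succ] at *; omega))
  have hmem : x i ∈ partialClosure x i.succ :=
    Subgroup.subset_closure ⟨i, by simp [Fin.val_succ], rfl⟩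
  have hnotmem : x i ∉ partialClosure x i.castSucc := by
    by_cases hi : (i : ℕ) < d - 1
    · have hqp' : p.Prime := Fact.out
      let i' : Fin (d - 1) := ⟨i, hi⟩
      let ev : Multiplicative (Fin (d - 1) → ZMod p) →* Multiplicative (ZMod p) :=
        AddMonoidHom.toMultiplicative (Pi.evalAddMonoidHom (fun _ : Fin (d-1) => ZMod p) i')
      have hle : partialClosure x i.castSucc ≤ (ev.ker).map inl := by
        refine (Subgroup.closure_le _).mpr ?_
        rintro _ ⟨j, hj, rfl⟩
        have hj' : (j : ℕ) < (i : ℕ) := by simpa using hj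
        have hjk : (j : ℕ) < d - 1 := lt_trans hj' hi
        refine Subgroup.mem_map.mpr
          ⟨(Multiplicative.ofAdd (Pi.single (⟨j, hjk⟩ : Fin (d - 1)) (1 : ZMod p) :
              Fin (d - 1) → ZMod p)), ?_, ?_⟩
        · refine MonoidHom.mem_ker.mpr ?_
          have hne : (Pi.single (⟨j, hjk⟩ : Fin (d - 1)) (1 : ZMod p) :
              Fin (d - 1) → ZMod p) i' = 0 :=
            Pi.single_eq_of_ne (by simp only [ne_eq, Fin.mk.injEq, i']; omega) _
          show Multiplicative.ofAdd ((Pi.single (⟨j, hjk⟩ : Fin (d - 1)) (1 : ZMod p) :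
              Fin (d - 1) → ZMod p) i') = 1
          rw [hne, ofAdd_zero]
        · simp only [x, dif_pos hjk]
      intro hmem'
      obtain ⟨v, hv, hveq⟩ := Subgroup.mem_map.mp (hle hmem')
      have hxi : x i = inl (Multiplicative.ofAdd (Pi.single i' (1 : ZMod p) :
          Fin (d - 1) → ZMod p)) := by
        simp only [x, dif_pos hi]; rfl
      rw [hxi] at hveq
      have hvv : v = Multiplicative.ofAdd (Pi.single i' (1 : ZMod p) :
          Fin (d - 1) → ZMod p) := inl_injective hveq
      rw [hvv] at hv
      have hev1 : Multiplicative.ofAdd ((Pi.single i' (1 : ZMod p) :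
          Fin (d - 1) → ZMod p) i') = (1 : Multiplicative (ZMod p)) := MonoidHom.mem_ker.mp hv
      rw [Pi.single_eq_same, ofAdd_eq_one] at hev1
      exact one_ne_zero hev1
    · have hle : partialClosure x i.castSucc ≤ MonoidHom.ker rightHom := by
        refine (Subgroup.closure_le _).mpr ?_
        rintro _ ⟨j, hj, rfl⟩
        have hj' : (j : ℕ) < (i : ℕ) := by simpa using hj
        have hjk : (j : ℕ) < d - 1 := by
          have := i.isLt; omega
        show rightHom (x j) = 1
        simp only [x, dif_pos hjk, rightHom_inl]
      intro hmem'
      have hker : rightHom (x i) = 1 := hle hmem'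
      have hxi : x i = inr (Multiplicative.ofAdd (1 : ZMod q)) := by
        simp only [x, dif_neg hi]
      rw [hxi, rightHom_inr] at hker
      haveI : Fact (1 < q) := ⟨hqp.one_lt⟩
      exact one_ne_zero (ofAdd_eq_one.mp hker)
  refine lt_of_le_of_ne hmono (fun heq => hnotmem (heq ▸ hmem))

end Specific

/-- `G = (C_p)^{d-1} ⋊ C_q`, where the generator of `C_q` acts on
`(C_p)^{d-1}` as multiplication by a scalar `c` of multiplicative order `q` mod `p`,
is uniformly generated with `d(G) = d`. -/
theorem scalarSemidirect_uniformlyGenerated (p q d : ℕ) (hp : p.Prime) (hq : q.Prime)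
    (hd : 1 ≤ d) (c : ZMod p) (hc : orderOf c = q)
    (φ : Multiplicative (ZMod q) →* MulAut (Multiplicative (Fin (d - 1) → ZMod p)))
    (hφ : ∀ (x : ZMod q) (v : Fin (d - 1) → ZMod p),
      φ (Multiplicative.ofAdd x) (Multiplicative.ofAdd v)
        = Multiplicative.ofAdd (c ^ x.val • v)) :
    minGen (Multiplicative (Fin (d - 1) → ZMod p) ⋊[φ] Multiplicative (ZMod q)) = d ∧
    DUnifGen (Multiplicative (Fin (d - 1) → ZMod p) ⋊[φ] Multiplicative (ZMod q)) d := by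
  haveI : Fact p.Prime := ⟨hp⟩
  haveI : Fact q.Prime := ⟨hq⟩
  set G := Multiplicative (Fin (d - 1) → ZMod p) ⋊[φ] Multiplicative (ZMod q) with hG
  have hΩG : Ω (Nat.card G) = d := by
    rw [card_GG, cardFactors_mul (pow_ne_zero _ hp.ne_zero) hq.ne_zero,
      cardFactors_apply_prime_pow hp, cardFactors_apply_prime hq]
    omega
  have hDU2 : ∀ x : Fin d → G, StrictMono (partialClosure x) →
      Subgroup.closure (Set.range x) = ⊤ :=
    fun x hx => chain_reaches_top x hx hΩG.le
  obtain ⟨xe, hxe⟩ := exists_strictmono_chain (φ := φ) (p := p) hφ hd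
  have hmem : (Finset.univ.image xe).card ∈
      {n | ∃ S : Finset G, S.card = n ∧ Subgroup.closure (S : Set G) = ⊤} := by
    refine ⟨Finset.univ.image xe, rfl, ?_⟩
    rw [Finset.coe_image, Finset.coe_univ, Set.image_univ]
    exact hDU2 xe hxe
  have hlow : ∀ n ∈ {n | ∃ S : Finset G, S.card = n ∧ Subgroup.closure (S : Set G) = ⊤},
      d ≤ n := by
    rintro n ⟨S, rfl, hS⟩
    have h1 := closure_card_omega hφ hc S
    rw [hS, Subgroup.card_top, hΩG] at h1
    exact h1
  constructor
  · apply le_antisymm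
    · exact (Nat.sInf_le hmem).trans
        ((Finset.card_image_le).trans (le_of_eq (by simp)))
    · exact le_csInf ⟨_, hmem⟩ hlow
  · exact ⟨⟨xe, hxe⟩, hDU2⟩
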